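/- Let g(I, J; x, W) = x_{i_1} ⊙ (W^{(j_1)}_{i_1,i_2} x_{i_2} ⊙ (... ⊙ (W^{(j_{p-1})}_{i_{p-1},i_p} x_{i_p}))). Then for the feature-wise cross network x^{l} defined blockwise by x_i^{l} = x_i ⊙ Σ_q W^{(l)}_{i,q} x_q^{l-1} + x_i^{l-1} with x^0 = x, the i-th block satisfies x_i^l = Σ_{p=2}^{l+1} Σ_{I ∈ S_p^i} Σ_{J ∈ C_l^{p-1}} g(I, J; x, W) + x_i, where S_p^i is the set of p-tuples in {1,...,c}^p with first entry i, and C_l^{p-1} is the set of strictly decreasing (p-1)-tuples in {1,...,l}. -/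
import Mathlib


open scoped Classical

/-- `g(I, J; x, W)` for `I = i :: rest` and `J` the list of layer indices:
`g = x_{i₁} ⊙ (W^{(j₁)}_{i₁,i₂} x_{i₂} ⊙ (… ⊙ (W^{(j_{p-1})}_{i_{p-1},i_p} x_{i_p})))`. -/
def gcross {c : ℕ} {e : Fin c → ℕ} (x : ∀ i, Fin (e i) → ℝ)
    (W : ℕ → ∀ a b : Fin c, Matrix (Fin (e a)) (Fin (e b)) ℝ) :
    (i : Fin c) → List (Fin c) → List ℕ → (Fin (e i) → ℝ)
  | i, [], _ => x i
  | i, i' :: rest, j :: js => x i * (W j i i').mulVec (gcross x W i' rest js)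
  | _, _ :: _, [] => 0

/-- The big sum in the expansion. -/
private def Scross (c : ℕ) (e : Fin c → ℕ) (x : ∀ i, Fin (e i) → ℝ)
    (W : ℕ → ∀ a b : Fin c, Matrix (Fin (e a)) (Fin (e b)) ℝ) (l : ℕ) (i : Fin c) :
    Fin (e i) → ℝ :=
  ∑ m ∈ Finset.Icc 1 l,
    ∑ rest : Fin m → Fin c,
      ∑ J ∈ Finset.univ.filter (fun J : Fin m → Fin l => StrictAnti J),
        gcross x W i (List.ofFn rest) (List.ofFn fun a => (J a : ℕ) + 1)

private lemma anti_empty {m l : ℕ} (h : l < m) :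
    (Finset.univ.filter (fun J : Fin m → Fin l => StrictAnti J)) = ∅ := by
  ext J
  simp only [Finset.mem_filter, Finset.mem_univ, true_and, Finset.notMem_empty, iff_false]
  intro hJ
  have := Fintype.card_le_of_injective J hJ.injective
  simp only [Fintype.card_fin] at this
  omega

private lemma mulVec_finsum {n m : ℕ} (A : Matrix (Fin n) (Fin m) ℝ) {ι : Type*}
    (s : Finset ι) (f : ι → Fin m → ℝ) :
    A.mulVec (∑ j ∈ s, f j) = ∑ j ∈ s, A.mulVec (f j) := by
  classical
  induction s using Finset.cons_induction with
  | empty => simp [Matrix.mulVec_zero]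
  | cons a s ha ih => rw [Finset.sum_cons, Finset.sum_cons, Matrix.mulVec_add, ih]

private lemma anti_split {M : Type*} [AddCommMonoid M] (l m : ℕ)
    (f : (Fin (m + 1) → Fin (l + 1)) → M) :
    ∑ J ∈ Finset.univ.filter (fun J : Fin (m + 1) → Fin (l + 1) => StrictAnti J), f J
      = (∑ J ∈ Finset.univ.filter (fun J : Fin (m + 1) → Fin l => StrictAnti J),
          f (fun a => (J a).castSucc))
        + ∑ J ∈ Finset.univ.filter (fun J : Fin m → Fin l => StrictAnti J),
          f (Fin.cons (Fin.last l) (fun a => (J a).castSucc)) := by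
  rw [← Finset.sum_filter_add_sum_filter_not
      (Finset.univ.filter (fun J : Fin (m + 1) → Fin (l + 1) => StrictAnti J))
      (fun J => J 0 ≠ Fin.last l) f]
  congr 1
  · symm
    refine Finset.sum_bij (fun (J : Fin (m + 1) → Fin l) _ => fun a => (J a).castSucc)
      ?_ ?_ ?_ ?_
    · intro J hJ
      simp only [Finset.mem_filter, Finset.mem_univ, true_and] at hJ ⊢
      exact ⟨fun a b hab => Fin.castSucc_lt_castSucc_iff.2 (hJ hab),
        (Fin.castSucc_lt_last _).ne⟩
    · intro J1 h1 J2 h2 h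
      funext a
      exact Fin.castSucc_injective _ (congrFun h a)
    · intro J hJ
      simp only [Finset.mem_filter, Finset.mem_univ, true_and] at hJ
      obtain ⟨hanti, hne⟩ := hJ
      have hlt : ∀ a, J a ≠ Fin.last l := by
        intro a
        rcases eq_or_ne a 0 with rfl | ha
        · exact hne
        · have h0a : (0 : Fin (m + 1)) < a := Fin.pos_iff_ne_zero.2 ha
          have h1 : J a < J 0 := hanti h0a
          have h2 : J 0 ≤ Fin.last l := Fin.le_last _
          exact (h1.trans_le h2).ne
      refine ⟨fun a => (J a).castPred (hlt a), ?_, ?_⟩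
      · simp only [Finset.mem_filter, Finset.mem_univ, true_and]
        intro a b hab
        have h := hanti hab
        rw [Fin.lt_def, Fin.coe_castPred, Fin.coe_castPred]
        exact Fin.lt_def.1 h
      · funext a
        exact Fin.castSucc_castPred _ _
    · intro J hJ
      rfl
  · symm
    refine Finset.sum_bij
      (fun (J : Fin m → Fin l) _ => Fin.cons (Fin.last l) (fun a => (J a).castSucc))
      ?_ ?_ ?_ ?_
    · intro J hJ
      simp only [Finset.mem_filter, Finset.mem_univ, true_and] at hJ
      simp only [Finset.mem_filter, Finset.mem_univ, true_and, not_not]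
      constructor
      · intro a b hab
        revert hab
        induction b using Fin.cases with
        | zero => intro hab; exact absurd hab (by simp [Fin.lt_def])
        | succ b' =>
          induction a using Fin.cases with
          | zero =>
            intro _
            simp only [Fin.cons_zero, Fin.cons_succ]
            exact Fin.castSucc_lt_last _
          | succ a' =>
            intro hab
            simp only [Fin.cons_succ]
            exact Fin.castSucc_lt_castSucc_iff.2 (hJ (Fin.succ_lt_succ_iff.1 hab))
      · simp
    · intro J1 h1 J2 h2 h
      funext a
      have := congrFun h a.succ
      simp only [Fin.cons_succ] at this
      exact Fin.castSucc_injective _ this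
    · intro J hJ
      simp only [Finset.mem_filter, Finset.mem_univ, true_and, not_not] at hJ
      obtain ⟨hanti, h0⟩ := hJ
      have hlt : ∀ a : Fin m, J a.succ ≠ Fin.last l := by
        intro a
        have : J a.succ < J 0 := hanti (Fin.succ_pos a)
        rw [h0] at this
        exact this.ne
      refine ⟨fun a => (J a.succ).castPred (hlt a), ?_, ?_⟩
      · simp only [Finset.mem_filter, Finset.mem_univ, true_and]
        intro a b hab
        have h := hanti (Fin.succ_lt_succ_iff.2 hab)
        rw [Fin.lt_def, Fin.coe_castPred, Fin.coe_castPred]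
        exact Fin.lt_def.1 h
      · funext a
        induction a using Fin.cases with
        | zero =>
          simp only [Fin.cons_zero]
          exact h0.symm
        | succ a' =>
          simp only [Fin.cons_succ]
          exact Fin.castSucc_castPred _ _
    · intro J hJ
      rfl

private lemma Scross_succ (c l : ℕ) (e : Fin c → ℕ) (x : ∀ i, Fin (e i) → ℝ)
    (W : ℕ → ∀ a b : Fin c, Matrix (Fin (e a)) (Fin (e b)) ℝ) (i : Fin c) :
    Scross c e x W (l + 1) i
      = x i * (∑ q, (W (l + 1) i q).mulVec (Scross c e x W l q + x q))
        + Scross c e x W l i := by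
  have hIcc : Finset.Icc 1 (l + 1) = Finset.image (· + 1) (Finset.range (l + 1)) := by
    ext n
    simp only [Finset.mem_Icc, Finset.mem_image, Finset.mem_range]
    constructor
    · rintro ⟨h1, h2⟩; exact ⟨n - 1, by omega, by omega⟩
    · rintro ⟨a, ha, rfl⟩; omega
  have hinj : ∀ a ∈ Finset.range (l + 1), ∀ b ∈ Finset.range (l + 1),
      a + 1 = b + 1 → a = b := by intros; omega
  -- the key pointwise split
  have key : ∀ n : ℕ,
      (∑ rest : Fin (n + 1) → Fin c,
        ∑ J ∈ Finset.univ.filter (fun J : Fin (n + 1) → Fin (l + 1) => StrictAnti J),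
          gcross x W i (List.ofFn rest) (List.ofFn fun a => (J a : ℕ) + 1))
      = (∑ rest : Fin (n + 1) → Fin c,
          ∑ J ∈ Finset.univ.filter (fun J : Fin (n + 1) → Fin l => StrictAnti J),
            gcross x W i (List.ofFn rest) (List.ofFn fun a => (J a : ℕ) + 1))
        + ∑ q : Fin c, ∑ rest : Fin n → Fin c,
            ∑ J ∈ Finset.univ.filter (fun J : Fin n → Fin l => StrictAnti J),
              x i * (W (l + 1) i q).mulVec
                (gcross x W q (List.ofFn rest) (List.ofFn fun a => (J a : ℕ) + 1)) := by
    intro n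
    have step1 : ∀ rest : Fin (n + 1) → Fin c,
        (∑ J ∈ Finset.univ.filter (fun J : Fin (n + 1) → Fin (l + 1) => StrictAnti J),
          gcross x W i (List.ofFn rest) (List.ofFn fun a => (J a : ℕ) + 1))
        = (∑ J ∈ Finset.univ.filter (fun J : Fin (n + 1) → Fin l => StrictAnti J),
            gcross x W i (List.ofFn rest) (List.ofFn fun a => (J a : ℕ) + 1))
          + ∑ J ∈ Finset.univ.filter (fun J : Fin n → Fin l => StrictAnti J),
              gcross x W i (List.ofFn rest)
                ((l + 1) :: List.ofFn fun a => (J a : ℕ) + 1) := by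
      intro rest
      refine (anti_split l n
        (fun J => gcross x W i (List.ofFn rest) (List.ofFn fun a => ((J a : ℕ)) + 1))).trans ?_
      refine congrArg₂ (· + ·) (Finset.sum_congr rfl fun J _ => rfl)
        (Finset.sum_congr rfl fun J _ => ?_)
      refine congrArg (gcross x W i (List.ofFn rest)) ?_
      have hh : ((Fin.cons (Fin.last l) (fun b => (J b).castSucc)
          : Fin (n + 1) → Fin (l + 1)) 0 : ℕ) + 1 = l + 1 := by
        simp only [Fin.cons_zero, Fin.val_last]
      have ht : (fun a : Fin n => ((Fin.cons (Fin.last l) (fun b => (J b).castSucc)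
            : Fin (n + 1) → Fin (l + 1)) a.succ : ℕ) + 1)
          = fun a => ((J a : ℕ) + 1) :=
        funext fun a => by simp only [Fin.cons_succ, Fin.coe_castSucc]
      rw [List.ofFn_succ, hh, ht]
    rw [Finset.sum_congr rfl (fun rest _ => step1 rest), Finset.sum_add_distrib]
    congr 1
    -- split off the head of `rest`
    rw [← (Fin.consEquiv (fun _ : Fin (n + 1) => Fin c)).sum_comp, Fintype.sum_prod_type]
    apply Finset.sum_congr rfl
    intro q _
    apply Finset.sum_congr rfl
    intro rest _
    apply Finset.sum_congr rfl
    intro J _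
    have hofn : List.ofFn ((Fin.consEquiv (fun _ : Fin (n + 1) => Fin c)) (q, rest))
        = q :: List.ofFn rest := by
      have h0 : ((Fin.consEquiv (fun _ : Fin (n + 1) => Fin c)) (q, rest))
          = Fin.cons q rest := rfl
      have ht : (fun i : Fin n => (Fin.cons q rest : Fin (n + 1) → Fin c) i.succ)
          = rest := funext fun a => by simp only [Fin.cons_succ]
      rw [h0, List.ofFn_succ, ht, Fin.cons_zero]
    rw [hofn]
    rfl
  -- assemble
  have expand : Scross c e x W (l + 1) i
      = (∑ n ∈ Finset.range (l + 1),
          ∑ rest : Fin (n + 1) → Fin c,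
            ∑ J ∈ Finset.univ.filter (fun J : Fin (n + 1) → Fin l => StrictAnti J),
              gcross x W i (List.ofFn rest) (List.ofFn fun a => (J a : ℕ) + 1))
        + ∑ n ∈ Finset.range (l + 1),
            ∑ q : Fin c, ∑ rest : Fin n → Fin c,
              ∑ J ∈ Finset.univ.filter (fun J : Fin n → Fin l => StrictAnti J),
                x i * (W (l + 1) i q).mulVec
                  (gcross x W q (List.ofFn rest) (List.ofFn fun a => (J a : ℕ) + 1)) := by
    rw [Scross, hIcc, Finset.sum_image hinj, ← Finset.sum_add_distrib]
    exact Finset.sum_congr rfl (fun n _ => key n)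
  rw [expand]
  -- first piece equals `Scross l i`
  have hA : (∑ n ∈ Finset.range (l + 1),
        ∑ rest : Fin (n + 1) → Fin c,
          ∑ J ∈ Finset.univ.filter (fun J : Fin (n + 1) → Fin l => StrictAnti J),
            gcross x W i (List.ofFn rest) (List.ofFn fun a => (J a : ℕ) + 1))
      = Scross c e x W l i := by
    have h1 : (∑ n ∈ Finset.range (l + 1),
        ∑ rest : Fin (n + 1) → Fin c,
          ∑ J ∈ Finset.univ.filter (fun J : Fin (n + 1) → Fin l => StrictAnti J),
            gcross x W i (List.ofFn rest) (List.ofFn fun a => (J a : ℕ) + 1))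
        = ∑ m ∈ Finset.Icc 1 (l + 1),
            ∑ rest : Fin m → Fin c,
              ∑ J ∈ Finset.univ.filter (fun J : Fin m → Fin l => StrictAnti J),
                gcross x W i (List.ofFn rest) (List.ofFn fun a => (J a : ℕ) + 1) := by
      rw [hIcc, Finset.sum_image hinj]
    rw [h1, Finset.sum_Icc_succ_top (by omega :  1 ≤ l + 1)]
    rw [anti_empty (Nat.lt_succ_self l)]
    simp [Scross]
  rw [hA]
  -- second piece
  have hB : (∑ n ∈ Finset.range (l + 1),
        ∑ q : Fin c, ∑ rest : Fin n → Fin c,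
          ∑ J ∈ Finset.univ.filter (fun J : Fin n → Fin l => StrictAnti J),
            x i * (W (l + 1) i q).mulVec
              (gcross x W q (List.ofFn rest) (List.ofFn fun a => (J a : ℕ) + 1)))
      = (∑ q : Fin c, x i * (W (l + 1) i q).mulVec (x q))
        + ∑ q : Fin c, x i * (W (l + 1) i q).mulVec (Scross c e x W l q) := by
    have hr : Finset.range (l + 1) = insert 0 (Finset.Icc 1 l) := by
      ext n; simp only [Finset.mem_range, Finset.mem_insert, Finset.mem_Icc]; omega
    rw [hr, Finset.sum_insert (by simp)]
    congr 1
    · -- n = 0 term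
      apply Finset.sum_congr rfl
      intro q _
      rw [Finset.filter_true_of_mem (fun (J : Fin 0 → Fin l) _ => ?_)]
      · haveI : Unique (Fin 0 → Fin c) := Pi.uniqueOfIsEmpty _
        haveI : Unique (Fin 0 → Fin l) := Pi.uniqueOfIsEmpty _
        rw [Fintype.sum_unique, Fintype.sum_unique]
        rfl
      · intro a b hab
        exact a.elim0
    · -- n ∈ Icc 1 l
      rw [Finset.sum_comm]
      apply Finset.sum_congr rfl
      intro q _
      rw [Scross, mulVec_finsum, Finset.mul_sum]
      apply Finset.sum_congr rfl
      intro m _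
      rw [mulVec_finsum, Finset.mul_sum]
      apply Finset.sum_congr rfl
      intro rest _
      rw [mulVec_finsum, Finset.mul_sum]
  rw [hB]
  have hdist : (x i * (∑ q, (W (l + 1) i q).mulVec (Scross c e x W l q + x q)))
      = (∑ q : Fin c, x i * (W (l + 1) i q).mulVec (x q))
        + ∑ q : Fin c, x i * (W (l + 1) i q).mulVec (Scross c e x W l q) := by
    simp only [Matrix.mulVec_add, Finset.sum_add_distrib, mul_add, Finset.mul_sum]
    ring
  rw [hdist]
  abel

theorem featurewise_cross_expansion
    (c l : ℕ) (e : Fin c → ℕ) (x : ∀ i, Fin (e i) → ℝ)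
    (W : ℕ → ∀ a b : Fin c, Matrix (Fin (e a)) (Fin (e b)) ℝ)
    (xs : ℕ → ∀ i, Fin (e i) → ℝ)
    (h0 : ∀ i, xs 0 i = x i)
    (hrec : ∀ j, 1 ≤ j → j ≤ l → ∀ i,
      xs j i = x i * (∑ q, (W j i q).mulVec (xs (j - 1) q)) + xs (j - 1) i) :
    ∀ i, xs l i
      = (∑ m ∈ Finset.Icc 1 l,
          ∑ rest : Fin m → Fin c,
            ∑ J ∈ Finset.univ.filter (fun J : Fin m → Fin l => StrictAnti J),
              gcross x W i (List.ofFn rest) (List.ofFn fun a => (J a : ℕ) + 1))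
        + x i := by
  revert hrec
  induction l with
  | zero =>
    intro _ i
    rw [Finset.Icc_eq_empty (by omega)]
    simp [h0 i]
  | succ l ih =>
    intro hrec i
    have ihl := ih (fun j h1 h2 => hrec j h1 (h2.trans (Nat.le_succ l)))
    have hx : xs (l + 1) i
        = x i * (∑ q, (W (l + 1) i q).mulVec (xs l q)) + xs l i := by
      simpa using hrec (l + 1) (by omega) le_rfl i
    have hxs : ∀ q, xs l q = Scross c e x W l q + x q := fun q => ihl q
    show xs (l + 1) i = Scross c e x W (l + 1) i + x i
    rw [hx, Scross_succ]
    simp only [hxs]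
    abel
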